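/- Let S be a nonempty semigroup and let T be an S-valued sequence with Π(T) ∩ E(S) = ∅. Then |Π(T)| ≥ |T|, i.e., the number of distinct products of permuted nonempty subsequences of T is at least the length of T. -/

import Mathlib

/-- Product, in order, of the nonempty list `a :: l` in a semigroup. -/
def sprod {S : Type*} [Mul S] (a : S) (l : List S) : S := l.foldl (· * ·) a

/-- `pow1 x n = x^(n+1)`: the `(n+1)`-st power of `x` in a semigroup. -/
def pow1 {S : Type*} [Mul S] (x : S) : ℕ → S := fun n => Nat.rec x (fun _ y => y * x) n

/-- `Π(T)`: the set of products, in order, of nonempty lists which are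
permutations of order-preserving sublists of `T`. -/
def PiSet {S : Type*} [Mul S] (T : List S) : Set S :=
  {s | ∃ u : List S, u.Sublist T ∧ ∃ a l, (a :: l).Perm u ∧ sprod a l = s}

/-- `A(L)`: the set of products, in order, of nonempty order-preserving sublists of `L`. -/
def ASet {S : Type*} [Mul S] (L : List S) : Set S :=
  {s | ∃ a l, (a :: l).Sublist L ∧ sprod a l = s}

/-- `HasIndexPeriod x r p` says that `r` is the index of `x` (the least `r > 0` such
that `x^r = x^t` for some positive `t ≠ r`) and `p` is the period of `x` (the least
`p > 0` with `x^(r+p) = x^r`). Powers are expressed via `pow1 x (n-1) = x^n`. -/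
def HasIndexPeriod {S : Type*} [Mul S] (x : S) (r p : ℕ) : Prop :=
  (0 < r ∧ (∃ t, 0 < t ∧ t ≠ r ∧ pow1 x (t - 1) = pow1 x (r - 1)) ∧
    ∀ r', 0 < r' → (∃ t, 0 < t ∧ t ≠ r' ∧ pow1 x (t - 1) = pow1 x (r' - 1)) → r ≤ r') ∧
  (0 < p ∧ pow1 x (r + p - 1) = pow1 x (r - 1) ∧
    ∀ p', 0 < p' → pow1 x (r + p' - 1) = pow1 x (r - 1) → p ≤ p')

lemma sprod_concat {S : Type*} [Mul S] (a : S) (l : List S) (x : S) :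
    sprod a (l ++ [x]) = sprod a l * x := by simp [sprod]

lemma pow1_succ {S : Type*} [Mul S] (x : S) (n : ℕ) : pow1 x (n + 1) = pow1 x n * x := rfl

lemma pow1_add {S : Type*} [Semigroup S] (x : S) (m n : ℕ) :
    pow1 x (m + n + 1) = pow1 x m * pow1 x n := by
  induction n with
  | zero => rfl
  | succ n ih =>
    show pow1 x (m + n + 1 + 1) = _
    rw [pow1_succ, ih, pow1_succ, mul_assoc]

lemma piSet_finite {S : Type*} [Mul S] (T : List S) : (PiSet T).Finite := by
  apply Set.Finite.subset (List.finite_toSet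
    ((T.sublists.flatMap List.permutations).filterMap
      (fun l => match l with | [] => none | a :: l => some (sprod a l))))
  rintro s ⟨u, hu, a, l, hp, hs⟩
  simp only [List.mem_filterMap, List.mem_flatMap, List.mem_sublists, List.mem_permutations]
  exact ⟨a :: l, ⟨u, hu, hp⟩, by simp [hs]⟩

lemma piSet_mono {S : Type*} [Mul S] {T₁ T₂ : List S} (h : T₁.Sublist T₂) :
    PiSet T₁ ⊆ PiSet T₂ := by
  rintro s ⟨u, hu, a, l, hp, hs⟩
  exact ⟨u, hu.trans h, a, l, hp, hs⟩

lemma mem_piSet_concat {S : Type*} [Mul S] (T : List S) (x : S) :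
    x ∈ PiSet (T ++ [x]) :=
  ⟨[x], List.sublist_append_right T [x], x, [], List.Perm.refl _, rfl⟩

lemma mul_mem_piSet_concat {S : Type*} [Mul S] {T : List S} {x y : S}
    (hy : y ∈ PiSet T) : y * x ∈ PiSet (T ++ [x]) := by
  obtain ⟨u, hu, a, l, hp, hs⟩ := hy
  refine ⟨u ++ [x], hu.append (List.Sublist.refl [x]), a, l ++ [x], ?_, ?_⟩
  · exact List.Perm.append_right [x] hp
  · rw [sprod_concat, hs]

lemma pow1_period {S : Type*} [Semigroup S] (x : S) (a d : ℕ) (hd : 0 < d)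
    (h : pow1 x (a + d) = pow1 x a) : ∀ n, a ≤ n → pow1 x (n + d) = pow1 x n := by
  intro n hn
  obtain ⟨m, rfl⟩ := Nat.exists_eq_add_of_le hn
  cases m with
  | zero => exact h
  | succ k =>
    have e1 : a + (k + 1) + d = (a + d) + k + 1 := by omega
    have e2 : a + (k + 1) = a + k + 1 := by omega
    rw [e1, pow1_add, h, e2, pow1_add]

lemma pow1_period_iter {S : Type*} [Semigroup S] (x : S) (a d : ℕ) (hd : 0 < d)
    (h : pow1 x (a + d) = pow1 x a) : ∀ k n, a ≤ n → pow1 x (n + k * d) = pow1 x n := by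
  intro k
  induction k with
  | zero => simp
  | succ k ih =>
    intro n hn
    have e1 : n + (k + 1) * d = (n + k * d) + d := by ring
    rw [e1, pow1_period x a d hd h _ (by omega), ih n hn]

/-- If `Π(T)` contains no idempotent, then `|Π(T)| ≥ |T|`. -/
theorem stmt_4 {S : Type*} [Semigroup S] [Nonempty S]
    (T : List S) (hfree : PiSet T ∩ {e : S | e * e = e} = ∅) :
    T.length ≤ (PiSet T).ncard := by
  induction T using List.reverseRecOn with
  | nil => simp
  | append_singleton T₀ x ih =>
    have hsub : PiSet T₀ ⊆ PiSet (T₀ ++ [x]) := piSet_mono (List.sublist_append_left T₀ [x])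
    have hfree₀ : PiSet T₀ ∩ {e : S | e * e = e} = ∅ := by
      rw [Set.eq_empty_iff_forall_notMem] at hfree ⊢
      exact fun s hs => hfree s ⟨hsub hs.1, hs.2⟩
    have hfin : (PiSet (T₀ ++ [x])).Finite := piSet_finite _
    by_cases hle : PiSet (T₀ ++ [x]) ⊆ PiSet T₀
    · -- derive contradiction: all powers of x lie in the finite set PiSet T₀
      exfalso
      have hpow : ∀ n, pow1 x n ∈ PiSet T₀ := by
        intro n
        induction n with
        | zero => exact hle (mem_piSet_concat T₀ x)
        | succ n ihn => exact hle (mul_mem_piSet_concat ihn)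
      have hfin₀ : (PiSet T₀).Finite := piSet_finite T₀
      obtain ⟨a, -, b, -, hab, heq⟩ :=
        Set.Infinite.exists_ne_map_eq_of_mapsTo (f := pow1 x) (Set.infinite_univ (α := ℕ))
          (fun n _ => hpow n) hfin₀
      wlog hlt : a < b generalizing a b
      · exact this b a hab.symm heq.symm (by omega)
      set d := b - a with hdd
      have hd : 0 < d := by omega
      have hper : pow1 x (a + d) = pow1 x a := by
        have : a + d = b := by omega
        rw [this, heq]
      have h1 : a + 1 ≤ (a + 1) * d := Nat.le_mul_of_pos_right _ hd
      set N := (a + 1) * d - 1 with hN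
      have hN1 : N + 1 = (a + 1) * d := by omega
      have haN : a ≤ N := by omega
      have hidem : pow1 x N * pow1 x N = pow1 x N := by
        rw [← pow1_add]
        have : N + N + 1 = N + (a + 1) * d := by omega
        rw [this, pow1_period_iter x a d hd hper (a + 1) N haN]
      rw [Set.eq_empty_iff_forall_notMem] at hfree
      exact hfree (pow1 x N) ⟨hsub (hpow N), hidem⟩
    · have hss : PiSet T₀ ⊂ PiSet (T₀ ++ [x]) := ⟨hsub, hle⟩
      have := Set.ncard_lt_ncard hss hfin
      have := ih hfree₀
      simp only [List.length_append, List.length_singleton]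
      omega
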